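/- Let M be a 5×5 real matrix with minor-sums J_1, …, J_5, and suppose J_1·J_2·J_3 > 0, J_4 > 0 and J_1·(J_5 − J_2·J_3) > 0. Then D2(M) ≤ 0. -/
import Mathlib


/-- The `k`-th minor-sum of a `5 × 5` real matrix `M`: the sum of its `k × k`
principal minors, i.e. `(-1)^k` times the coefficient of `X^(5-k)` in the
characteristic polynomial. -/
noncomputable def J5 (M : Matrix (Fin 5) (Fin 5) ℝ) (k : ℕ) : ℝ :=
  (-1) ^ k * (Matrix.charpoly M).coeff (5 - k)

/-- The determinant of the second additive compound of a `5 × 5` real matrix. -/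
noncomputable def D2 (M : Matrix (Fin 5) (Fin 5) ℝ) : ℝ :=
  -(J5 M 5) ^ 2 + 2 * J5 M 1 * J5 M 4 * J5 M 5 + J5 M 2 * J5 M 3 * J5 M 5
    - J5 M 1 * (J5 M 2) ^ 2 * J5 M 5 - (J5 M 1) ^ 2 * (J5 M 4) ^ 2
    - (J5 M 3) ^ 2 * J5 M 4 + J5 M 1 * J5 M 2 * J5 M 3 * J5 M 4

private lemma d2_key (p t r v : ℝ) (hp : 0 < p*(p+t)) (hr : 0 < r)
    (hv : p^2 + p*t < v + r) : 0 ≤ v^2 - p*t*v + r*t^2 := by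
  nlinarith [sq_nonneg (2*v - p*t), sq_nonneg (v + r - p^2 - p*t), mul_pos hp hr,
    sq_nonneg (v - p*t), sq_nonneg t, sq_nonneg (p*t), sq_nonneg (v + r),
    sq_nonneg (t+p), mul_pos hr hr]

private lemma d2_alg (a b c d e : ℝ) (h1 : 0 < a*b*c) (h2 : 0 < d)
    (h3 : 0 < a*(e - b*c)) :
    -e^2 + 2*a*d*e + b*c*e - a*b^2*e - a^2*d^2 - c^2*d + a*b*c*d ≤ 0 := by
  have ha : a ≠ 0 := by rintro rfl; simp at h3
  have ha2 : (0:ℝ) < a^2 := by positivity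
  have key := d2_key (a*b) (c - a*b) (a^2*d) (a*e - a^2*d)
    (by nlinarith [h1]) (by positivity) (by nlinarith [h3])
  nlinarith [key, ha2, mul_pos ha2 ha2]

theorem fivePattern_D2_nonpos_1
    (M : Matrix (Fin 5) (Fin 5) ℝ)
    (h123 : 0 < J5 M 1 * J5 M 2 * J5 M 3)
    (h4 : 0 < J5 M 4)
    (h5 : 0 < J5 M 1 * (J5 M 5 - J5 M 2 * J5 M 3)) :
    D2 M ≤ 0 := by
  have := d2_alg (J5 M 1) (J5 M 2) (J5 M 3) (J5 M 4) (J5 M 5) h123 h4 h5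
  unfold D2
  linarith
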